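/- Let n ≥ 1 and let p(z) = ∑_{k=0}^{n} a_k z^k be a polynomial with complex coefficients a_k = α_k + β_k i (α_k, β_k real) satisfying α_n ≥ α_{n−1} ≥ ⋯ ≥ α_1 ≥ α_0 ≥ 0 and α_n > 0. Then p(z) ≠ 0 for every complex z with |z| > 1 + (2/α_n) · ∑_{k=0}^{n} |β_k|. -/

import Mathlib

open Finset

/-- Theorem 1.3: a complex polynomial whose coefficients have nonnegative, nondecreasing
real parts (with positive leading real part) does not vanish outside the stated disk. -/
theorem govil_rahman_real_parts (n : ℕ) (hn : 1 ≤ n) (a : ℕ → ℂ)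
    (h0 : 0 ≤ (a 0).re)
    (hmono : ∀ k < n, (a k).re ≤ (a (k + 1)).re)
    (hpos : 0 < (a n).re)
    (z : ℂ)
    (hz : 1 + 2 / (a n).re * ∑ k ∈ Finset.range (n + 1), |(a k).im| < ‖z‖) :
    ∑ k ∈ Finset.range (n + 1), a k * z ^ k ≠ 0 := by
  intro hS
  set R := ‖z‖ with hRdef
  set B := ∑ k ∈ Finset.range (n + 1), |(a k).im| with hBdef
  have hB : 0 ≤ B := Finset.sum_nonneg fun _ _ => abs_nonneg _
  have hR1 : 1 < R := by
    have : 0 ≤ 2 / (a n).re * B :=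
      mul_nonneg (div_nonneg (by norm_num) hpos.le) hB
    linarith
  have hR0 : 0 < R := lt_trans one_pos hR1
  -- key identity from (z - 1) * p(z) = 0
  have key : a n * z ^ (n + 1) = a 0 + ∑ k ∈ Finset.range n, (a (k + 1) - a k) * z ^ (k + 1) := by
    have h1 : (z - 1) * ∑ k ∈ Finset.range (n + 1), a k * z ^ k = 0 := by rw [hS]; ring
    have e0 : (z - 1) * ∑ k ∈ Finset.range (n + 1), a k * z ^ k
        = ∑ k ∈ Finset.range (n + 1), a k * z ^ (k + 1)
          - ∑ k ∈ Finset.range (n + 1), a k * z ^ k := by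
      rw [sub_one_mul, Finset.mul_sum]
      congr 1
      exact Finset.sum_congr rfl fun k _ => by ring
    have e1 : ∑ k ∈ Finset.range (n + 1), a k * z ^ (k + 1)
        = (∑ k ∈ Finset.range n, a k * z ^ (k + 1)) + a n * z ^ (n + 1) :=
      Finset.sum_range_succ _ _
    have e2 : ∑ k ∈ Finset.range (n + 1), a k * z ^ k
        = (∑ k ∈ Finset.range n, a (k + 1) * z ^ (k + 1)) + a 0 * z ^ 0 :=
      Finset.sum_range_succ' _ _
    have e3 : ∑ k ∈ Finset.range n, (a (k + 1) - a k) * z ^ (k + 1)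
        = (∑ k ∈ Finset.range n, a (k + 1) * z ^ (k + 1))
          - ∑ k ∈ Finset.range n, a k * z ^ (k + 1) := by
      rw [← Finset.sum_sub_distrib]
      exact Finset.sum_congr rfl fun k _ => by ring
    rw [e0, e1, e2] at h1
    rw [e3]
    have : a 0 * z ^ 0 = a 0 := by ring
    linear_combination h1 + this
  -- take absolute values
  have habs : (a n).re * R ^ (n + 1)
      ≤ ‖a 0‖ + ∑ k ∈ Finset.range n, ‖a (k + 1) - a k‖ * R ^ (k + 1) := by
    have h1 : (a n).re * R ^ (n + 1) ≤ ‖a n * z ^ (n + 1)‖ := by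
      rw [norm_mul, norm_pow]
      exact mul_le_mul_of_nonneg_right (Complex.re_le_norm _) (by positivity)
    have h2 : ‖a 0 + ∑ k ∈ Finset.range n, (a (k + 1) - a k) * z ^ (k + 1)‖
        ≤ ‖a 0‖ + ∑ k ∈ Finset.range n, ‖a (k + 1) - a k‖ * R ^ (k + 1) := by
      refine le_trans (norm_add_le _ _) (add_le_add_right ?_ _)
      refine le_trans (norm_sum_le _ _) ?_
      refine Finset.sum_le_sum fun k _ => ?_
      rw [norm_mul, norm_pow]
    calc (a n).re * R ^ (n + 1) ≤ ‖a n * z ^ (n + 1)‖ := h1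
      _ = ‖a 0 + ∑ k ∈ Finset.range n, (a (k + 1) - a k) * z ^ (k + 1)‖ := by rw [key]
      _ ≤ _ := h2
  -- bound powers of R by R ^ n
  have hpow : ‖a 0‖ + ∑ k ∈ Finset.range n, ‖a (k + 1) - a k‖ * R ^ (k + 1)
      ≤ (‖a 0‖ + ∑ k ∈ Finset.range n, ‖a (k + 1) - a k‖) * R ^ n := by
    have hRn : (1 : ℝ) ≤ R ^ n := one_le_pow₀ hR1.le
    rw [add_mul, Finset.sum_mul]
    refine add_le_add (le_mul_of_one_le_right (norm_nonneg _) hRn) ?_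
    refine Finset.sum_le_sum fun k hk => ?_
    have hk' : k + 1 ≤ n := Finset.mem_range.mp hk
    exact mul_le_mul_of_nonneg_left (pow_le_pow_right₀ hR1.le hk') (norm_nonneg _)
  -- bound the coefficient sum
  have hcoef : ‖a 0‖ + ∑ k ∈ Finset.range n, ‖a (k + 1) - a k‖
      ≤ (a n).re + 2 * B := by
    have hb0 : ‖a 0‖ ≤ (a 0).re + |(a 0).im| := by
      have := Complex.norm_le_abs_re_add_abs_im (a 0)
      rwa [abs_of_nonneg h0] at this
    have hbd : ∀ k ∈ Finset.range n, ‖a (k + 1) - a k‖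
        ≤ ((a (k + 1)).re - (a k).re) + (|(a (k + 1)).im| + |(a k).im|) := by
      intro k hk
      have hkn := Finset.mem_range.mp hk
      have h1 := Complex.norm_le_abs_re_add_abs_im (a (k + 1) - a k)
      have hre : |(a (k + 1) - a k).re| = (a (k + 1)).re - (a k).re := by
        rw [Complex.sub_re, abs_of_nonneg (by linarith [hmono k hkn])]
      have him : |(a (k + 1) - a k).im| ≤ |(a (k + 1)).im| + |(a k).im| := by
        rw [Complex.sub_im]; exact abs_sub _ _
      rw [hre] at h1
      linarith
    have hsum : ∑ k ∈ Finset.range n, ‖a (k + 1) - a k‖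
        ≤ ∑ k ∈ Finset.range n, (((a (k + 1)).re - (a k).re) + (|(a (k + 1)).im| + |(a k).im|)) :=
      Finset.sum_le_sum hbd
    have htel : ∑ k ∈ Finset.range n, ((a (k + 1)).re - (a k).re) = (a n).re - (a 0).re :=
      Finset.sum_range_sub (fun k => (a k).re) n
    have hs1 : ∑ k ∈ Finset.range n, |(a (k + 1)).im| = B - |(a 0).im| := by
      have := Finset.sum_range_succ' (fun k => |(a k).im|) n
      rw [hBdef, this]; ring
    have hs2 : ∑ k ∈ Finset.range n, |(a k).im| ≤ B := by
      rw [hBdef]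
      exact Finset.sum_le_sum_of_subset_of_nonneg
        (Finset.range_subset_range.mpr (Nat.le_succ n)) (fun i _ _ => abs_nonneg ((a i).im))
    rw [Finset.sum_add_distrib, Finset.sum_add_distrib, htel, hs1] at hsum
    have hb0' : |(a 0).im| ≤ B := by
      rw [hBdef]
      exact Finset.single_le_sum (f := fun k => |(a k).im|) (fun i _ => abs_nonneg _) (Finset.mem_range.mpr (Nat.succ_pos n))
    linarith
  -- combine
  have hRn0 : 0 < R ^ n := pow_pos hR0 n
  have hfinal : (a n).re * R ≤ (a n).re + 2 * B := by
    have h1 : (a n).re * R * R ^ n ≤ ((a n).re + 2 * B) * R ^ n := by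
      have := le_trans habs (le_trans hpow (mul_le_mul_of_nonneg_right hcoef hRn0.le))
      calc (a n).re * R * R ^ n = (a n).re * R ^ (n + 1) := by ring
        _ ≤ _ := this
    exact le_of_mul_le_mul_right h1 hRn0
  have : (a n).re * (1 + 2 / (a n).re * B) < (a n).re * R :=
    mul_lt_mul_of_pos_left hz hpos
  have hexp : (a n).re * (1 + 2 / (a n).re * B) = (a n).re + 2 * B := by
    field_simp
  linarith [hexp ▸ this]
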